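/- For all β, ε > 0 and integers i₀' > i₀ ≥ 1, there exist β' > 0 and n₀ such that the following holds for all n ≥ n₀. Given an n-vertex 3-graph H and a vertex x ∈ V(H) with |Ñ_{β,i₀}(x)| ≥ εn, then Ñ_{β,i₀}(x) ⊆ Ñ_{β',i₀'}(x); in other words, if x, y ∈ V(H) are (β, i₀)-reachable in H and |Ñ_{β,i₀}(x)| ≥ εn, then x, y are (β', i₀')-reachable in H. -/

import Mathlib

/-- The degree of a vertex set `S` in the hypergraph with edge set `E`:
the number of edges containing `S`. -/
def degS {n : ℕ} (E : Finset (Finset (Fin n))) (S : Finset (Fin n)) : ℕ :=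
  (E.filter (fun e => S ⊆ e)).card

/-- `s` spans a copy of `C₆³` (edges 123, 345, 561) in the 3-graph with edge set `E`. -/
def IsC6Copy {n : ℕ} (E : Finset (Finset (Fin n))) (s : Finset (Fin n)) : Prop :=
  ∃ v : Fin 6 → Fin n, Function.Injective v ∧
    s = {v 0, v 1, v 2, v 3, v 4, v 5} ∧
    {v 0, v 1, v 2} ∈ E ∧ {v 2, v 3, v 4} ∈ E ∧ {v 4, v 5, v 0} ∈ E

/-- The set `W` can be perfectly tiled by vertex-disjoint copies of `C₆³`
(seen as a `C₆³`-factor of the subhypergraph induced on `W`). -/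
def HasC6Factor {n : ℕ} (E : Finset (Finset (Fin n))) (W : Finset (Fin n)) : Prop :=
  ∃ P : Finset (Finset (Fin n)), (∀ s ∈ P, IsC6Copy E s) ∧
    (∀ s ∈ P, ∀ t ∈ P, s ≠ t → Disjoint s t) ∧ P.biUnion id = W

/-- The number of reachable `m`-sets for `x` and `y`: sets `S ⊆ V ∖ {x,y}` of size `m`
such that both `H[{x} ∪ S]` and `H[{y} ∪ S]` contain `C₆³`-factors. -/
noncomputable def numReachSets {n : ℕ} (E : Finset (Finset (Fin n))) (x y : Fin n) (m : ℕ) : ℕ :=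
  {S : Finset (Fin n) | S.card = m ∧ x ∉ S ∧ y ∉ S ∧
    HasC6Factor E (insert x S) ∧ HasC6Factor E (insert y S)}.ncard

/-- `x` and `y` are `(β, i)`-reachable: there are at least `β·n^(6i-1)` reachable
`(6i-1)`-sets for `x` and `y`. -/
def IsReachable {n : ℕ} (β : ℝ) (i : ℕ) (E : Finset (Finset (Fin n))) (x y : Fin n) : Prop :=
  β * (n : ℝ) ^ (6 * i - 1) ≤ (numReachSets E x y (6 * i - 1) : ℝ)

/-- `Ñ_{β,i}(x)`: the set of vertices `(β, i)`-reachable to `x`. -/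
def tildeN {n : ℕ} (β : ℝ) (i : ℕ) (E : Finset (Finset (Fin n))) (x : Fin n) : Set (Fin n) :=
  {y | y ≠ x ∧ IsReachable β i E x y}

/-! ### Auxiliary machinery -/

lemma copy_card {n : ℕ} {E : Finset (Finset (Fin n))} {s : Finset (Fin n)}
    (h : IsC6Copy E s) : s.card = 6 := by
  obtain ⟨v, hv, rfl, -⟩ := h
  have h6 : ({v 0, v 1, v 2, v 3, v 4, v 5} : Finset (Fin n)) = Finset.image v Finset.univ := by
    have hu : (Finset.univ : Finset (Fin 6)) = {0, 1, 2, 3, 4, 5} := by decide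
    rw [hu]
    simp [Finset.image_insert]
  rw [h6, Finset.card_image_of_injective _ hv]
  simp

lemma hasFactor_union {n : ℕ} {E : Finset (Finset (Fin n))} {A B : Finset (Fin n)}
    (hA : HasC6Factor E A) (hB : HasC6Factor E B) (hAB : Disjoint A B) :
    HasC6Factor E (A ∪ B) := by
  classical
  obtain ⟨P, hP1, hP2, hP3⟩ := hA
  obtain ⟨Q, hQ1, hQ2, hQ3⟩ := hB
  have hsubP : ∀ u ∈ P, u ⊆ A := fun u hu => hP3 ▸ Finset.subset_biUnion_of_mem id hu
  have hsubQ : ∀ u ∈ Q, u ⊆ B := fun u hu => hQ3 ▸ Finset.subset_biUnion_of_mem id hu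
  refine ⟨P ∪ Q, ?_, ?_, ?_⟩
  · intro s hs
    rcases Finset.mem_union.1 hs with h | h
    exacts [hP1 s h, hQ1 s h]
  · intro s hs t ht hst
    rcases Finset.mem_union.1 hs with h1 | h1 <;> rcases Finset.mem_union.1 ht with h2 | h2
    · exact hP2 s h1 t h2 hst
    · exact hAB.mono (hsubP s h1) (hsubQ t h2)
    · exact hAB.symm.mono (hsubQ s h1) (hsubP t h2)
    · exact hQ2 s h1 t h2 hst
  · ext a
    simp only [Finset.mem_biUnion, Finset.mem_union, id]
    constructor
    · rintro ⟨u, hu | hu, ha⟩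
      · exact Or.inl (hP3 ▸ Finset.mem_biUnion.2 ⟨u, hu, ha⟩)
      · exact Or.inr (hQ3 ▸ Finset.mem_biUnion.2 ⟨u, hu, ha⟩)
    · rintro (h | h)
      · rw [← hP3] at h
        obtain ⟨u, hu, ha⟩ := Finset.mem_biUnion.1 h
        exact ⟨u, Or.inl hu, ha⟩
      · rw [← hQ3] at h
        obtain ⟨u, hu, ha⟩ := Finset.mem_biUnion.1 h
        exact ⟨u, Or.inr hu, ha⟩

lemma exists_copy_subset {n : ℕ} {E : Finset (Finset (Fin n))} {W : Finset (Fin n)}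
    (h : HasC6Factor E W) (hW : W.Nonempty) :
    ∃ C : Finset (Fin n), C ⊆ W ∧ C.card = 6 ∧ HasC6Factor E C := by
  obtain ⟨P, hP1, hP2, hP3⟩ := h
  have hPne : P.Nonempty := by
    by_contra hc
    rw [Finset.not_nonempty_iff_eq_empty] at hc
    subst hc
    simp at hP3
    rw [← hP3] at hW
    simp [Finset.not_nonempty_empty] at hW
  obtain ⟨C, hC⟩ := hPne
  refine ⟨C, hP3 ▸ Finset.subset_biUnion_of_mem id hC, copy_card (hP1 C hC), ⟨{C}, ?_, ?_, ?_⟩⟩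
  · simpa using hP1 C hC
  · simp
  · simp

open Classical in
noncomputable def pickCopy {n : ℕ} (E : Finset (Finset (Fin n))) (W : Finset (Fin n)) :
    Finset (Fin n) :=
  if h : HasC6Factor E W ∧ W.Nonempty then (exists_copy_subset h.1 h.2).choose else ∅

lemma pickCopy_spec {n : ℕ} {E : Finset (Finset (Fin n))} {W : Finset (Fin n)}
    (h1 : HasC6Factor E W) (h2 : W.Nonempty) :
    pickCopy E W ⊆ W ∧ (pickCopy E W).card = 6 ∧ HasC6Factor E (pickCopy E W) := by
  rw [pickCopy, dif_pos (⟨h1, h2⟩ : HasC6Factor E W ∧ W.Nonempty)]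
  exact (exists_copy_subset h1 h2).choose_spec

lemma card_supersets_mul_le {n : ℕ} (D : Finset (Fin n)) (m : ℕ) :
    (Finset.univ.filter (fun T : Finset (Fin n) => T.card = m ∧ D ⊆ T)).card * n ^ D.card
      ≤ n ^ m := by
  classical
  by_cases hDm : D.card ≤ m
  · have h1 : (Finset.univ.filter (fun T : Finset (Fin n) => T.card = m ∧ D ⊆ T)).card
        ≤ n ^ (m - D.card) := by
      have hinj : (Finset.univ.filter (fun T : Finset (Fin n) => T.card = m ∧ D ⊆ T)).card
          ≤ (Finset.univ.powersetCard (m - D.card) : Finset (Finset (Fin n))).card := by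
        apply Finset.card_le_card_of_injOn (fun T => T \ D)
        · intro T hT
          simp only [Finset.coe_filter, Finset.mem_filter, Finset.mem_coe, Set.mem_setOf_eq, Finset.mem_univ, true_and] at hT
          simp only [Finset.mem_coe, Finset.mem_powersetCard]
          exact ⟨Finset.subset_univ _, by rw [Finset.card_sdiff_of_subset hT.2, hT.1]⟩
        · intro T1 h1 T2 h2 he
          simp only [Finset.coe_filter, Set.mem_setOf_eq, Finset.mem_univ, true_and] at h1 h2
          have := congrArg (· ∪ D) he
          simpa [Finset.sdiff_union_of_subset h1.2, Finset.sdiff_union_of_subset h2.2] using this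
      calc _ ≤ _ := hinj
        _ = (n).choose (m - D.card) := by
            rw [Finset.card_powersetCard, Finset.card_univ, Fintype.card_fin]
        _ ≤ n ^ (m - D.card) := Nat.choose_le_pow _ _
    calc _ ≤ n ^ (m - D.card) * n ^ D.card := Nat.mul_le_mul_right _ h1
      _ = n ^ m := by rw [← pow_add, Nat.sub_add_cancel hDm]
  · have hemp : (Finset.univ.filter (fun T : Finset (Fin n) => T.card = m ∧ D ⊆ T)) = ∅ := by
      rw [Finset.filter_eq_empty_iff]
      intro T _
      rintro ⟨h1, h2⟩
      exact hDm (h1 ▸ Finset.card_le_card h2)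
    simp [hemp]

open Classical in
/-- The reachable `m`-sets for `x` and `y`, as a `Finset`. -/
noncomputable def reachFinset {n : ℕ} (E : Finset (Finset (Fin n))) (x y : Fin n) (m : ℕ) :
    Finset (Finset (Fin n)) :=
  Finset.univ.filter (fun S => S.card = m ∧ x ∉ S ∧ y ∉ S ∧
    HasC6Factor E (insert x S) ∧ HasC6Factor E (insert y S))

lemma mem_reachFinset {n : ℕ} {E : Finset (Finset (Fin n))} {x y : Fin n} {m : ℕ}
    {S : Finset (Fin n)} :
    S ∈ reachFinset E x y m ↔ S.card = m ∧ x ∉ S ∧ y ∉ S ∧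
      HasC6Factor E (insert x S) ∧ HasC6Factor E (insert y S) := by
  simp [reachFinset]

lemma numReachSets_eq {n : ℕ} (E : Finset (Finset (Fin n))) (x y : Fin n) (m : ℕ) :
    numReachSets E x y m = (reachFinset E x y m).card := by
  classical
  rw [numReachSets]
  have h : {S : Finset (Fin n) | S.card = m ∧ x ∉ S ∧ y ∉ S ∧
      HasC6Factor E (insert x S) ∧ HasC6Factor E (insert y S)}
      = ↑(reachFinset E x y m) := by
    ext S
    simp [reachFinset]
  rw [h, Set.ncard_coe_finset]

open Classical in
/-- The 6-sets disjoint from `F` spanning a (tiled) copy of `C₆³`. -/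
noncomputable def copFinset {n : ℕ} (E : Finset (Finset (Fin n))) (F : Finset (Fin n)) :
    Finset (Finset (Fin n)) :=
  Finset.univ.filter (fun C => C.card = 6 ∧ Disjoint C F ∧ HasC6Factor E C)

lemma copies_lower (β ε : ℝ) (hβ : 0 < β) (hε : 0 < ε) (i₀ : ℕ) (hi₀ : 1 ≤ i₀) (f₀ : ℕ) :
    ∃ n₁ : ℕ, 1 ≤ n₁ ∧ ∀ n : ℕ, n₁ ≤ n → ∀ E : Finset (Finset (Fin n)), ∀ x : Fin n,
      ε * n ≤ ((tildeN β i₀ E x).ncard : ℝ) →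
      ∀ F : Finset (Fin n), F.card ≤ f₀ →
      ε * β / 28 * (n : ℝ) ^ 6 ≤ ((copFinset E F).card : ℝ) := by
  classical
  refine ⟨max (max 1 ⌈(2 * f₀ : ℝ) / ε⌉₊) ⌈(2 * f₀ : ℝ) / β⌉₊,
    le_max_of_le_left (le_max_left _ _), ?_⟩
  intro n hn E x hx F hF
  set m0 := 6 * i₀ - 1 with hm0
  have hm05 : 5 ≤ m0 := by omega
  have hn1 : 1 ≤ n := le_trans (le_max_of_le_left (le_max_left _ _)) hn
  have hnR : (1 : ℝ) ≤ (n : ℝ) := by exact_mod_cast hn1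
  have hnpos : (0 : ℝ) < (n : ℝ) := lt_of_lt_of_le one_pos hnR
  have hne : (2 * f₀ : ℝ) / ε ≤ n := by
    have h1 : (⌈(2 * f₀ : ℝ) / ε⌉₊ : ℝ) ≤ n := by
      exact_mod_cast le_trans (le_max_of_le_left (le_max_right _ _)) hn
    exact (Nat.le_ceil _).trans h1
  have hnb : (2 * f₀ : ℝ) / β ≤ n := by
    have h1 : (⌈(2 * f₀ : ℝ) / β⌉₊ : ℝ) ≤ n := by
      exact_mod_cast le_trans (le_max_right _ _) hn
    exact (Nat.le_ceil _).trans h1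
  have hfε : (f₀ : ℝ) ≤ ε / 2 * n := by
    rw [div_le_iff₀ hε] at hne
    nlinarith
  have hfβ : (f₀ : ℝ) ≤ β / 2 * n := by
    rw [div_le_iff₀ hβ] at hnb
    nlinarith
  set Z := (Set.toFinite (tildeN β i₀ E x)).toFinset \ F with hZ
  have hZcard : ε / 2 * n ≤ (Z.card : ℝ) := by
    have h1 : (tildeN β i₀ E x).ncard = (Set.toFinite (tildeN β i₀ E x)).toFinset.card :=
      Set.ncard_eq_toFinset_card _ _
    have h2 : (Set.toFinite (tildeN β i₀ E x)).toFinset.card ≤ Z.card + F.card :=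
      Finset.card_le_card_sdiff_add_card
    have h3 : ((Set.toFinite (tildeN β i₀ E x)).toFinset.card : ℝ) ≤ (Z.card : ℝ) + f₀ := by
      have : (Set.toFinite (tildeN β i₀ E x)).toFinset.card ≤ Z.card + f₀ :=
        h2.trans (Nat.add_le_add_left hF _)
      exact_mod_cast this
    rw [h1] at hx
    linarith
  set gT : Fin n → Finset (Finset (Fin n)) :=
    fun z => (reachFinset E x z m0).filter (fun T => Disjoint T F) with hgT
  have hgTcard : ∀ z ∈ Z, β / 2 * (n : ℝ) ^ m0 ≤ ((gT z).card : ℝ) := by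
    intro z hz
    have hzt : z ∈ tildeN β i₀ E x := by
      have := (Finset.mem_sdiff.1 hz).1
      rwa [Set.Finite.mem_toFinset] at this
    have hreach : β * (n : ℝ) ^ m0 ≤ ((reachFinset E x z m0).card : ℝ) := by
      have h := hzt.2
      rw [IsReachable, numReachSets_eq] at h
      exact h
    have hsplit : ((reachFinset E x z m0).filter (fun T => Disjoint T F)).card
        + ((reachFinset E x z m0).filter (fun T => ¬ Disjoint T F)).card
        = (reachFinset E x z m0).card :=
      Finset.card_filter_add_card_filter_not _
    have hbadsub : (reachFinset E x z m0).filter (fun T => ¬ Disjoint T F)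
        ⊆ F.biUnion (fun v => Finset.univ.filter
            (fun T : Finset (Fin n) => T.card = m0 ∧ {v} ⊆ T)) := by
      intro T hT
      simp only [Finset.mem_filter] at hT
      obtain ⟨hT1, hT2⟩ := hT
      obtain ⟨v, hvT, hvF⟩ := Finset.not_disjoint_iff.1 hT2
      refine Finset.mem_biUnion.2 ⟨v, hvF, ?_⟩
      simp only [Finset.mem_filter, Finset.mem_univ, true_and]
      exact ⟨(mem_reachFinset.1 hT1).1, Finset.singleton_subset_iff.2 hvT⟩
    have hbad : ((reachFinset E x z m0).filter (fun T => ¬ Disjoint T F)).card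
        ≤ f₀ * n ^ (m0 - 1) := by
      have hone : ∀ v : Fin n,
          (Finset.univ.filter (fun T : Finset (Fin n) => T.card = m0 ∧ {v} ⊆ T)).card
            ≤ n ^ (m0 - 1) := by
        intro v
        have h := card_supersets_mul_le ({v} : Finset (Fin n)) m0
        rw [Finset.card_singleton, pow_one] at h
        have hpow : n ^ m0 = n ^ (m0 - 1) * n := by
          rw [← pow_succ]
          congr 1
          omega
        rw [hpow] at h
        exact Nat.le_of_mul_le_mul_right h (by omega)
      calc ((reachFinset E x z m0).filter (fun T => ¬ Disjoint T F)).card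
          ≤ (F.biUnion (fun v => Finset.univ.filter
              (fun T : Finset (Fin n) => T.card = m0 ∧ {v} ⊆ T))).card :=
            Finset.card_le_card hbadsub
        _ ≤ ∑ v ∈ F, (Finset.univ.filter
              (fun T : Finset (Fin n) => T.card = m0 ∧ {v} ⊆ T)).card :=
            Finset.card_biUnion_le
        _ ≤ ∑ _v ∈ F, n ^ (m0 - 1) := Finset.sum_le_sum (fun v _ => hone v)
        _ = F.card * n ^ (m0 - 1) := by rw [Finset.sum_const, smul_eq_mul]
        _ ≤ f₀ * n ^ (m0 - 1) := Nat.mul_le_mul_right _ hF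
    have hbadR : (((reachFinset E x z m0).filter (fun T => ¬ Disjoint T F)).card : ℝ)
        ≤ (f₀ : ℝ) * (n : ℝ) ^ (m0 - 1) := by exact_mod_cast hbad
    have hgood : ((gT z).card : ℝ)
        = ((reachFinset E x z m0).card : ℝ)
          - (((reachFinset E x z m0).filter (fun T => ¬ Disjoint T F)).card : ℝ) := by
      have := hsplit
      push_cast [← this]
      ring
    have hpowR : (n : ℝ) ^ m0 = (n : ℝ) ^ (m0 - 1) * n := by
      rw [← pow_succ]
      congr 1
      omega
    have hfb : (f₀ : ℝ) * (n : ℝ) ^ (m0 - 1) ≤ β / 2 * (n : ℝ) ^ m0 := by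
      rw [hpowR]
      have hp : (0 : ℝ) ≤ (n : ℝ) ^ (m0 - 1) := by positivity
      calc (f₀ : ℝ) * (n : ℝ) ^ (m0 - 1) ≤ (β / 2 * n) * (n : ℝ) ^ (m0 - 1) :=
            mul_le_mul_of_nonneg_right hfβ hp
        _ = β / 2 * ((n : ℝ) ^ (m0 - 1) * n) := by ring
    rw [hgood]
    linarith
  set Pairs := Z.sigma (fun z => gT z) with hPairs
  have hPairscard : ε / 2 * n * (β / 2 * (n : ℝ) ^ m0) ≤ (Pairs.card : ℝ) := by
    have hc : (Pairs.card : ℝ) = ∑ z ∈ Z, ((gT z).card : ℝ) := by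
      rw [hPairs, Finset.card_sigma]
      push_cast
      rfl
    rw [hc]
    have hsum : ∑ _z ∈ Z, (β / 2 * (n : ℝ) ^ m0) ≤ ∑ z ∈ Z, ((gT z).card : ℝ) :=
      Finset.sum_le_sum hgTcard
    rw [Finset.sum_const, nsmul_eq_mul] at hsum
    have h1 : ε / 2 * n * (β / 2 * (n : ℝ) ^ m0) ≤ (Z.card : ℝ) * (β / 2 * (n : ℝ) ^ m0) :=
      mul_le_mul_of_nonneg_right hZcard (by positivity)
    linarith
  set g : (Σ _ : Fin n, Finset (Fin n)) → Finset (Fin n) :=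
    fun p => pickCopy E (insert p.1 p.2) with hg
  have hmaps : ∀ p ∈ Pairs, g p ∈ copFinset E F := by
    rintro ⟨z, T⟩ hp
    rw [hPairs, Finset.mem_sigma] at hp
    obtain ⟨hz, hT⟩ := hp
    rw [hgT, Finset.mem_filter] at hT
    obtain ⟨hTr, hTd⟩ := hT
    have hTr' := mem_reachFinset.1 hTr
    have hfac : HasC6Factor E (insert z T) := hTr'.2.2.2.2
    obtain ⟨hsub, hcard, hfac'⟩ := pickCopy_spec hfac (Finset.insert_nonempty _ _)
    rw [copFinset, Finset.mem_filter]
    refine ⟨Finset.mem_univ _, hcard, ?_, hfac'⟩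
    have hzF : z ∉ F := (Finset.mem_sdiff.1 hz).2
    exact (Finset.disjoint_insert_left.2 ⟨hzF, hTd⟩).mono_left hsub
  have hfiber : ∀ C ∈ Pairs.image g,
      (Pairs.filter (fun p => g p = C)).card * n ^ 6 ≤ 7 * n ^ (m0 + 1) := by
    intro C hC
    have hCcard : C.card = 6 := by
      obtain ⟨p0, hp0, hgp0⟩ := Finset.mem_image.1 hC
      have := hmaps p0 hp0
      rw [copFinset, Finset.mem_filter] at this
      rw [← hgp0]
      exact this.2.1
    have hsub : Pairs.filter (fun p => g p = C) ⊆
        Finset.univ.sigma (fun z : Fin n => Finset.univ.filter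
          (fun T : Finset (Fin n) => T.card = m0 ∧ C \ {z} ⊆ T)) := by
      rintro ⟨z, T⟩ hp
      rw [Finset.mem_filter] at hp
      obtain ⟨hpP, hpg⟩ := hp
      rw [hPairs, Finset.mem_sigma] at hpP
      obtain ⟨hz, hT⟩ := hpP
      rw [hgT, Finset.mem_filter] at hT
      have hTr' := mem_reachFinset.1 hT.1
      have hfac : HasC6Factor E (insert z T) := hTr'.2.2.2.2
      obtain ⟨hsub', -, -⟩ := pickCopy_spec hfac (Finset.insert_nonempty _ _)
      rw [Finset.mem_sigma]
      refine ⟨Finset.mem_univ _, ?_⟩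
      rw [Finset.mem_filter]
      refine ⟨Finset.mem_univ _, hTr'.1, ?_⟩
      intro v hv
      rw [Finset.mem_sdiff, Finset.mem_singleton] at hv
      have hvC : v ∈ pickCopy E (insert z T) := by
        have hC' : pickCopy E (insert z T) = C := hpg
        rw [hC']
        exact hv.1
      have := hsub' hvC
      rcases Finset.mem_insert.1 this with h | h
      · exact absurd h hv.2
      · exact h
    have hcnt : ∀ z : Fin n,
        (Finset.univ.filter (fun T : Finset (Fin n) => T.card = m0 ∧ C \ {z} ⊆ T)).card * n ^ 6
          ≤ (if z ∈ C then n ^ (m0 + 1) else n ^ m0) := by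
      intro z
      by_cases hzC : z ∈ C
      · simp only [hzC, if_true]
        have hD : (C \ {z}).card = 5 := by
          rw [Finset.sdiff_singleton_eq_erase, Finset.card_erase_of_mem hzC, hCcard]
        have h := card_supersets_mul_le (C \ {z}) m0
        rw [hD] at h
        calc (Finset.univ.filter
              (fun T : Finset (Fin n) => T.card = m0 ∧ C \ {z} ⊆ T)).card * n ^ 6
            = (Finset.univ.filter
              (fun T : Finset (Fin n) => T.card = m0 ∧ C \ {z} ⊆ T)).card * n ^ 5 * n := by ring
          _ ≤ n ^ m0 * n := Nat.mul_le_mul_right _ h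
          _ = n ^ (m0 + 1) := (pow_succ _ _).symm
      · simp only [hzC, if_false]
        have hD : (C \ {z}).card = 6 := by
          rw [Finset.sdiff_singleton_eq_erase, Finset.erase_eq_of_notMem hzC, hCcard]
        have h := card_supersets_mul_le (C \ {z}) m0
        rwa [hD] at h
    calc (Pairs.filter (fun p => g p = C)).card * n ^ 6
        ≤ (Finset.univ.sigma (fun z : Fin n => Finset.univ.filter
            (fun T : Finset (Fin n) => T.card = m0 ∧ C \ {z} ⊆ T))).card * n ^ 6 :=
          Nat.mul_le_mul_right _ (Finset.card_le_card hsub)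
      _ = ∑ z : Fin n, (Finset.univ.filter
            (fun T : Finset (Fin n) => T.card = m0 ∧ C \ {z} ⊆ T)).card * n ^ 6 := by
          rw [Finset.card_sigma, Finset.sum_mul]
      _ ≤ ∑ z : Fin n, (if z ∈ C then n ^ (m0 + 1) else n ^ m0) :=
          Finset.sum_le_sum (fun z _ => hcnt z)
      _ = (Finset.univ.filter (fun z : Fin n => z ∈ C)).card * n ^ (m0 + 1)
          + (Finset.univ.filter (fun z : Fin n => z ∉ C)).card * n ^ m0 := by
          rw [Finset.sum_ite, Finset.sum_const, Finset.sum_const, smul_eq_mul, smul_eq_mul]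
      _ ≤ 6 * n ^ (m0 + 1) + n * n ^ m0 := by
          apply Nat.add_le_add
          · apply Nat.mul_le_mul_right
            have : Finset.univ.filter (fun z : Fin n => z ∈ C) = C := by
              ext a; simp
            rw [this, hCcard]
          · apply Nat.mul_le_mul_right
            calc (Finset.univ.filter (fun z : Fin n => z ∉ C)).card
                ≤ (Finset.univ : Finset (Fin n)).card := Finset.card_le_card (Finset.filter_subset _ _)
              _ = n := by simp
      _ = 7 * n ^ (m0 + 1) := by rw [← pow_succ']; ring
  have hkey : Pairs.card * n ^ 6 ≤ (Pairs.image g).card * (7 * n ^ (m0 + 1)) := by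
    rw [Finset.card_eq_sum_card_image g Pairs, Finset.sum_mul]
    calc ∑ C ∈ Pairs.image g, (Pairs.filter (fun p => g p = C)).card * n ^ 6
        ≤ ∑ C ∈ Pairs.image g, 7 * n ^ (m0 + 1) := Finset.sum_le_sum hfiber
      _ = _ := by rw [Finset.sum_const, smul_eq_mul]
  have hcop : (Pairs.image g).card ≤ (copFinset E F).card :=
    Finset.card_le_card (Finset.image_subset_iff.2 hmaps)
  have hkeyR : (Pairs.card : ℝ) * (n : ℝ) ^ 6
      ≤ ((copFinset E F).card : ℝ) * (7 * (n : ℝ) ^ (m0 + 1)) := by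
    have h1 : Pairs.card * n ^ 6 ≤ (copFinset E F).card * (7 * n ^ (m0 + 1)) :=
      hkey.trans (Nat.mul_le_mul_right _ hcop)
    exact_mod_cast h1
  have hfinal : ε * β / 28 * (n : ℝ) ^ 6 * (7 * (n : ℝ) ^ (m0 + 1))
      ≤ ((copFinset E F).card : ℝ) * (7 * (n : ℝ) ^ (m0 + 1)) := by
    have heq : ε * β / 28 * (n : ℝ) ^ 6 * (7 * (n : ℝ) ^ (m0 + 1))
        = ε / 2 * n * (β / 2 * (n : ℝ) ^ m0) * (n : ℝ) ^ 6 := by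
      rw [pow_succ]
      ring
    rw [heq]
    calc ε / 2 * n * (β / 2 * (n : ℝ) ^ m0) * (n : ℝ) ^ 6
        ≤ (Pairs.card : ℝ) * (n : ℝ) ^ 6 :=
          mul_le_mul_of_nonneg_right hPairscard (by positivity)
      _ ≤ _ := hkeyR
  exact le_of_mul_le_mul_right hfinal (by positivity)


lemma good_step (β ε : ℝ) (hβ : 0 < β) (hε : 0 < ε) (i₀ : ℕ) (hi₀ : 1 ≤ i₀)
    (i : ℕ) (hi : 1 ≤ i) (b : ℝ) (hb : 0 < b) (n₀ : ℕ)
    (H : ∀ n : ℕ, n₀ ≤ n → ∀ E : Finset (Finset (Fin n)), ∀ x : Fin n,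
      ε * n ≤ ((tildeN β i₀ E x).ncard : ℝ) → tildeN β i₀ E x ⊆ tildeN b i E x) :
    ∃ b' : ℝ, 0 < b' ∧ ∃ n₀' : ℕ, ∀ n : ℕ, n₀' ≤ n →
      ∀ E : Finset (Finset (Fin n)), ∀ x : Fin n,
      ε * n ≤ ((tildeN β i₀ E x).ncard : ℝ) → tildeN β i₀ E x ⊆ tildeN b' (i + 1) E x := by
  classical
  obtain ⟨n₁, hn₁1, hcop⟩ := copies_lower β ε hβ hε i₀ hi₀ (6 * i + 1)
  set K := (6 * i + 5).choose 6 with hK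
  have hKpos : 0 < K := Nat.choose_pos (by omega)
  have hKR : (0 : ℝ) < (K : ℝ) := by exact_mod_cast hKpos
  refine ⟨b * (ε * β / 28) / K, by positivity, max n₀ n₁, ?_⟩
  intro n hn E x hx y hy
  have hyx : y ≠ x := hy.1
  have hrb : IsReachable b i E x y := (H n (le_trans (le_max_left _ _) hn) E x hx hy).2
  set m := 6 * i - 1 with hm
  have hm' : 6 * (i + 1) - 1 = m + 6 := by omega
  set R := reachFinset E x y m with hR
  have hRcard : b * (n : ℝ) ^ m ≤ (R.card : ℝ) := by
    rw [IsReachable, numReachSets_eq] at hrb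
    exact hrb
  set Pairs := R.sigma (fun S => copFinset E (S ∪ {x, y})) with hPairs
  have hcops : ∀ S ∈ R, ε * β / 28 * (n : ℝ) ^ 6 ≤ ((copFinset E (S ∪ {x, y})).card : ℝ) := by
    intro S hS
    apply hcop n (le_trans (le_max_right _ _) hn) E x hx
    have h1 : S.card = m := (mem_reachFinset.1 hS).1
    have h2 : ({x, y} : Finset (Fin n)).card ≤ 2 := by
      apply le_trans (Finset.card_insert_le _ _)
      simp
    have h3 := Finset.card_union_le S ({x, y} : Finset (Fin n))
    omega
  have hPairscard : b * (n : ℝ) ^ m * (ε * β / 28 * (n : ℝ) ^ 6) ≤ (Pairs.card : ℝ) := by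
    have hc : (Pairs.card : ℝ) = ∑ S ∈ R, ((copFinset E (S ∪ {x, y})).card : ℝ) := by
      rw [hPairs, Finset.card_sigma]
      push_cast
      rfl
    rw [hc]
    have hsum := Finset.sum_le_sum hcops
    rw [Finset.sum_const, nsmul_eq_mul] at hsum
    have h2 := mul_le_mul_of_nonneg_right hRcard
      (show (0 : ℝ) ≤ ε * β / 28 * (n : ℝ) ^ 6 by positivity)
    linarith
  set f : (Σ _ : Finset (Fin n), Finset (Fin n)) → Finset (Fin n) := fun p => p.1 ∪ p.2 with hf
  set R' := reachFinset E x y (m + 6) with hR'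
  have hdisj : ∀ p ∈ Pairs, Disjoint p.1 p.2 ∧ x ∉ p.2 ∧ y ∉ p.2 ∧ p.2.card = 6 ∧
      HasC6Factor E p.2 := by
    rintro ⟨S, C⟩ hp
    rw [hPairs, Finset.mem_sigma] at hp
    obtain ⟨hS, hC⟩ := hp
    rw [copFinset, Finset.mem_filter] at hC
    obtain ⟨-, hC1, hC2, hC3⟩ := hC
    refine ⟨(hC2.mono_right Finset.subset_union_left).symm, ?_, ?_, hC1, hC3⟩
    · exact fun hxc => (Finset.disjoint_left.1 hC2 hxc)
        (Finset.mem_union_right _ (by simp))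
    · exact fun hyc => (Finset.disjoint_left.1 hC2 hyc)
        (Finset.mem_union_right _ (by simp))
  have hmaps : ∀ p ∈ Pairs, f p ∈ R' := by
    rintro ⟨S, C⟩ hp
    obtain ⟨hdSC, hxC, hyC, hC1, hC3⟩ := hdisj ⟨S, C⟩ hp
    rw [hPairs, Finset.mem_sigma] at hp
    obtain ⟨hS, hC⟩ := hp
    obtain ⟨hS1, hS2, hS3, hS4, hS5⟩ := mem_reachFinset.1 hS
    rw [hR', mem_reachFinset]
    refine ⟨?_, ?_, ?_, ?_, ?_⟩
    · show (S ∪ C).card = m + 6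
      rw [Finset.card_union_eq_card_add_card.2 hdSC, hS1, hC1]
    · show x ∉ S ∪ C
      rw [Finset.mem_union]
      exact fun h => h.elim hS2 hxC
    · show y ∉ S ∪ C
      rw [Finset.mem_union]
      exact fun h => h.elim hS3 hyC
    · show HasC6Factor E (insert x (S ∪ C))
      rw [← Finset.insert_union]
      exact hasFactor_union hS4 hC3 (Finset.disjoint_insert_left.2 ⟨hxC, hdSC⟩)
    · show HasC6Factor E (insert y (S ∪ C))
      rw [← Finset.insert_union]
      exact hasFactor_union hS5 hC3 (Finset.disjoint_insert_left.2 ⟨hyC, hdSC⟩)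
  have hfiber : ∀ S' ∈ Pairs.image f, (Pairs.filter (fun p => f p = S')).card ≤ K := by
    intro S' hS'
    obtain ⟨p0, hp0, hfp0⟩ := Finset.mem_image.1 hS'
    have hS'm : S' ∈ R' := hfp0 ▸ hmaps p0 hp0
    have hS'card : S'.card = m + 6 := (mem_reachFinset.1 hS'm).1
    have hinj : (Pairs.filter (fun p => f p = S')).card ≤ (S'.powersetCard 6).card := by
      apply Finset.card_le_card_of_injOn (fun p => p.2)
      · rintro ⟨S, C⟩ hp
        rw [Finset.mem_coe, Finset.mem_filter] at hp
        obtain ⟨hpP, hpf⟩ := hp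
        obtain ⟨-, -, -, hC1, -⟩ := hdisj ⟨S, C⟩ hpP
        rw [Finset.mem_coe, Finset.mem_powersetCard]
        exact ⟨hpf ▸ Finset.subset_union_right, hC1⟩
      · rintro ⟨S1, C1⟩ h1 ⟨S2, C2⟩ h2 he
        rw [Finset.mem_coe, Finset.mem_filter] at h1 h2
        obtain ⟨h1P, h1f⟩ := h1
        obtain ⟨h2P, h2f⟩ := h2
        have hd1 := (hdisj ⟨S1, C1⟩ h1P).1
        have hd2 := (hdisj ⟨S2, C2⟩ h2P).1
        have hCe : C1 = C2 := he
        have hSe : S1 = S2 := by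
          have e1 : S1 = S' \ C1 := by
            rw [← h1f]
            exact (Finset.union_sdiff_cancel_right hd1).symm
          have e2 : S2 = S' \ C2 := by
            rw [← h2f]
            exact (Finset.union_sdiff_cancel_right hd2).symm
          rw [e1, e2, hCe]
        cases hCe
        cases hSe
        rfl
    calc (Pairs.filter (fun p => f p = S')).card ≤ (S'.powersetCard 6).card := hinj
      _ = (m + 6).choose 6 := by rw [Finset.card_powersetCard, hS'card]
      _ = K := by rw [hK]; congr 1; omega
  have hkey : Pairs.card ≤ K * (Pairs.image f).card :=
    Finset.card_le_mul_card_image Pairs K hfiber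
  have hR'card : (Pairs.image f).card ≤ R'.card :=
    Finset.card_le_card (Finset.image_subset_iff.2 hmaps)
  refine ⟨hyx, ?_⟩
  rw [IsReachable, numReachSets_eq, hm']
  have hch : (Pairs.card : ℝ) ≤ (K : ℝ) * (R'.card : ℝ) := by
    exact_mod_cast hkey.trans (Nat.mul_le_mul_left _ hR'card)
  have hmain : b * (ε * β / 28) * (n : ℝ) ^ (m + 6) ≤ (K : ℝ) * (R'.card : ℝ) := by
    calc b * (ε * β / 28) * (n : ℝ) ^ (m + 6)
        = b * (n : ℝ) ^ m * (ε * β / 28 * (n : ℝ) ^ 6) := by rw [pow_add]; ring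
      _ ≤ (Pairs.card : ℝ) := hPairscard
      _ ≤ (K : ℝ) * (R'.card : ℝ) := hch
  rw [div_mul_eq_mul_div, div_le_iff₀ hKR]
  calc b * (ε * β / 28) * (n : ℝ) ^ (m + 6) ≤ (K : ℝ) * (R'.card : ℝ) := hmain
    _ = (R'.card : ℝ) * K := by ring

/-- Proposition 2.1 of Lo–Markström: if `|Ñ_{β,i₀}(x)| ≥ εn` then
`Ñ_{β,i₀}(x) ⊆ Ñ_{β',i₀'}(x)`. -/
theorem reachability_upgrade (β ε : ℝ) (hβ : 0 < β) (hε : 0 < ε)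
    (i₀ i₀' : ℕ) (hi₀ : 1 ≤ i₀) (hii : i₀ < i₀') :
    ∃ β' : ℝ, 0 < β' ∧ ∃ n₀ : ℕ, ∀ n : ℕ, n₀ ≤ n →
      ∀ E : Finset (Finset (Fin n)), (∀ e ∈ E, e.card = 3) →
      ∀ x : Fin n, ε * n ≤ ((tildeN β i₀ E x).ncard : ℝ) →
      tildeN β i₀ E x ⊆ tildeN β' i₀' E x := by
  have main : ∀ d : ℕ, ∃ b : ℝ, 0 < b ∧ ∃ n₀ : ℕ, ∀ n : ℕ, n₀ ≤ n →
      ∀ E : Finset (Finset (Fin n)), ∀ x : Fin n,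
      ε * n ≤ ((tildeN β i₀ E x).ncard : ℝ) → tildeN β i₀ E x ⊆ tildeN b (i₀ + d) E x := by
    intro d
    induction d with
    | zero =>
      refine ⟨β, hβ, 0, ?_⟩
      intro n _ E x _
      rw [Nat.add_zero]
    | succ d ih =>
      obtain ⟨b, hb, n₀, H⟩ := ih
      obtain ⟨b', hb', n₀', H'⟩ :=
        good_step β ε hβ hε i₀ hi₀ (i₀ + d) (by omega) b hb n₀ H
      refine ⟨b', hb', n₀', ?_⟩
      rw [show i₀ + (d + 1) = (i₀ + d) + 1 by omega]
      exact H'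
  obtain ⟨b, hb, n₀, H⟩ := main (i₀' - i₀)
  refine ⟨b, hb, n₀, ?_⟩
  intro n hn E _hE3 x hx
  have := H n hn E x hx
  rwa [show i₀ + (i₀' - i₀) = i₀' by omega] at this
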